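/- For an integer k > 1, the unique positive real root y_0 of y^k - \sum_{i=0}^{k-1} y^i = 0 satisfies y_0 > 2(1 - 2^{-k}). -/
import Mathlib

lemma two_mul_lt_two_pow : ∀ k : ℕ, 3 ≤ k → 2 * k < 2 ^ k := by
  intro k hk
  induction k with
  | zero => omega
  | succ n ih =>
    rcases Nat.lt_or_ge n 3 with h | h
    · interval_cases n <;> first | omega | norm_num
    · have := ih (by omega)
      have h2 : 2 ^ n ≥ 2 := by
        calc (2:ℕ) ≤ 2 ^ 1 := by norm_num
        _ ≤ 2 ^ n := Nat.pow_le_pow_right (by norm_num) (by omega)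
      rw [pow_succ]
      omega

lemma bern_half (k : ℕ) (hk : 2 ≤ k) : (1/2 : ℝ) < (1 - (1/2:ℝ)^k)^k := by
  rcases Nat.lt_or_ge k 3 with h | h
  · have hk2 : k = 2 := by omega
    subst hk2; norm_num
  · have hb : 1 + (k : ℝ) * (-(1/2:ℝ)^k) ≤ (1 + (-(1/2:ℝ)^k))^k := by
      apply one_add_mul_le_pow
      have : (0:ℝ) < (1/2:ℝ)^k := by positivity
      have : (1/2:ℝ)^k ≤ 1 := by
        apply pow_le_one₀ <;> norm_num
      linarith
    have hkey : (k : ℝ) * (1/2:ℝ)^k < 1/2 := by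
      have h1 : (2 * k : ℕ) < 2 ^ k := two_mul_lt_two_pow k h
      have h2 : (2 * (k:ℝ)) < 2 ^ k := by exact_mod_cast h1
      have h3 : (0:ℝ) < 2 ^ k := by positivity
      rw [div_pow, one_pow, mul_one_div, div_lt_iff₀ h3]
      linarith
    have : (1 : ℝ) + (-(1/2:ℝ)^k) = 1 - (1/2:ℝ)^k := by ring
    rw [this] at hb
    nlinarith

/-- For an integer `k > 1`, the unique positive real root `y₀` of
`y^k - ∑_{i=0}^{k-1} y^i = 0` satisfies `y₀ > 2 (1 - 2^{-k})`. -/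
theorem stmt2 (k : ℕ) (hk : 2 ≤ k) (y₀ : ℝ) (hy₀ : 0 < y₀)
    (hroot : y₀ ^ k - ∑ i ∈ Finset.range k, y₀ ^ i = 0) :
    2 * (1 - (1 / 2 : ℝ) ^ k) < y₀ := by
  by_contra h
  push_neg at h
  set a : ℝ := 2 * (1 - (1 / 2 : ℝ) ^ k) with ha
  have hhalf : (1/2:ℝ)^k ≤ 1/4 := by
    calc (1/2:ℝ)^k ≤ (1/2:ℝ)^2 := by
          exact pow_le_pow_of_le_one (by norm_num) (by norm_num) hk
      _ = 1/4 := by norm_num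
  have ha1 : (1:ℝ) < a := by rw [ha]; norm_num at hhalf ⊢; linarith
  have ha0 : (0:ℝ) < a := by linarith
  have hSy : y₀ ^ k = ∑ i ∈ Finset.range k, y₀ ^ i := by linarith [sub_eq_zero.mp hroot]
  -- Step 1 : (∑ a^i) ≤ a^k
  have hSyp : (0:ℝ) < ∑ i ∈ Finset.range k, y₀ ^ i := by
    apply Finset.sum_pos
    · intro i _; positivity
    · exact ⟨0, Finset.mem_range.mpr (by omega)⟩
  have hterm : ∀ i ∈ Finset.range k, a ^ i * y₀ ^ k ≤ y₀ ^ i * a ^ k := by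
    intro i hi
    have hik : i ≤ k := le_of_lt (Finset.mem_range.mp hi)
    have e1 : y₀ ^ k = y₀ ^ i * y₀ ^ (k - i) := by
      rw [← pow_add]; congr 1; omega
    have e2 : a ^ k = a ^ i * a ^ (k - i) := by
      rw [← pow_add]; congr 1; omega
    rw [e1, e2]
    have hp : y₀ ^ (k - i) ≤ a ^ (k - i) := pow_le_pow_left₀ hy₀.le h _
    calc a ^ i * (y₀ ^ i * y₀ ^ (k - i)) = (a ^ i * y₀ ^ i) * y₀ ^ (k - i) := by ring
      _ ≤ (a ^ i * y₀ ^ i) * a ^ (k - i) := by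
          apply mul_le_mul_of_nonneg_left hp; positivity
      _ = y₀ ^ i * (a ^ i * a ^ (k - i)) := by ring
  have hsum : (∑ i ∈ Finset.range k, a ^ i) * y₀ ^ k ≤ (∑ i ∈ Finset.range k, y₀ ^ i) * a ^ k := by
    rw [Finset.sum_mul, Finset.sum_mul]
    exact Finset.sum_le_sum hterm
  rw [← hSy, mul_comm (y₀ ^ k) (a ^ k)] at hsum
  have hyk : (0:ℝ) < y₀ ^ k := by positivity
  have hstep1 : (∑ i ∈ Finset.range k, a ^ i) ≤ a ^ k :=
    le_of_mul_le_mul_right hsum hyk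
  -- Step 2 : a^k < ∑ a^i
  have h2a : (1:ℝ) < a ^ k * (2 - a) := by
    have e3 : (2:ℝ) - a = 2 * (1/2:ℝ)^k := by rw [ha]; ring
    have e4 : a ^ k = 2 ^ k * (1 - (1/2:ℝ)^k) ^ k := by rw [ha, mul_pow]
    have e5 : (2:ℝ)^k * (1/2:ℝ)^k = 1 := by
      rw [← mul_pow]; norm_num
    have hb := bern_half k hk
    calc (1:ℝ) < 2 * (1 - (1/2:ℝ)^k)^k := by linarith
      _ = a ^ k * (2 - a) := by rw [e3, e4]; nlinarith [e5]
  have hgeom : (∑ i ∈ Finset.range k, a ^ i) * (a - 1) = a ^ k - 1 := geom_sum_mul a k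
  have hstep2 : a ^ k < ∑ i ∈ Finset.range k, a ^ i := by
    have ham : (0:ℝ) < a - 1 := by linarith
    have : a ^ k * (a - 1) < (∑ i ∈ Finset.range k, a ^ i) * (a - 1) := by
      rw [hgeom]; nlinarith
    exact lt_of_mul_lt_mul_right this (le_of_lt ham)
  linarith
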